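/- In the hypercube Q_d with p = ⌊d/2⌋, the set X = X_p ∪ X_{p+3}, where X_k is the set of vertices with exactly k ones, is a mutual-visibility set of Q_d. -/

import Mathlib

open SimpleGraph

/-- Two vertices are `X`-visible in `G`: some shortest path between them has
no internal vertex in `X`. -/
def IsVisiblePair {V : Type*} (G : SimpleGraph V) (X : Set V) (x y : V) : Prop :=
  ∃ p : G.Walk x y, p.IsPath ∧ p.length = G.dist x y ∧
    ∀ z ∈ p.support, z ∈ X → z = x ∨ z = y

/-- `X` is a mutual-visibility set of `G`. -/
def MutualVisSet {V : Type*} (G : SimpleGraph V) (X : Set V) : Prop :=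
  ∀ x ∈ X, ∀ y ∈ X, IsVisiblePair G X x y

/-- `X` is a total mutual-visibility set of `G`. -/
def TotalMutualVisSet {V : Type*} (G : SimpleGraph V) (X : Set V) : Prop :=
  ∀ x y : V, IsVisiblePair G X x y

/-- The mutual-visibility number `μ(G)`. -/
noncomputable def mutualVisNum {V : Type*} (G : SimpleGraph V) : ℕ :=
  sSup {n | ∃ X : Set V, MutualVisSet G X ∧ X.ncard = n}

/-- The total mutual-visibility number `μₜ(G)`. -/
noncomputable def totalMutualVisNum {V : Type*} (G : SimpleGraph V) : ℕ :=
  sSup {n | ∃ X : Set V, TotalMutualVisSet G X ∧ X.ncard = n}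

/-- A set of vertices is convex: every shortest path in `G` between two of its
vertices has all its vertices in the set. -/
def ConvexSet {V : Type*} (G : SimpleGraph V) (S : Set V) : Prop :=
  ∀ x ∈ S, ∀ y ∈ S, ∀ p : G.Walk x y, p.IsPath → p.length = G.dist x y →
    ∀ z ∈ p.support, z ∈ S

/-- The hypercube `Q_d`: vertices are `{0,1}^d`, adjacency is Hamming distance 1. -/
def Qube (d : ℕ) : SimpleGraph (Fin d → Bool) :=
  SimpleGraph.fromRel (fun x y => hammingDist x y = 1)

namespace TwoLayersAux

variable {d : ℕ}

/-- number of ones -/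
def wt (x : Fin d → Bool) : ℕ := (Finset.univ.filter fun i => x i = true).card

/-- flip one coordinate -/
def flip (i : Fin d) (x : Fin d → Bool) : Fin d → Bool := Function.update x i (!x i)

lemma flip_self (i : Fin d) (x : Fin d → Bool) : flip i x i = !x i :=
  Function.update_self ..

lemma flip_ne {i j : Fin d} (x : Fin d → Bool) (h : j ≠ i) : flip i x j = x j :=
  Function.update_of_ne h ..

lemma wt_flip_true {i : Fin d} {x : Fin d → Bool} (h : x i = true) :
    wt (flip i x) + 1 = wt x := by
  have hfe : (Finset.univ.filter fun j => flip i x j = true)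
      = (Finset.univ.filter fun j => x j = true).erase i := by
    ext j
    by_cases hj : j = i
    · subst hj; simp [flip_self, h]
    · simp [flip_ne x hj, hj]
  have hi : i ∈ Finset.univ.filter fun j => x j = true := by simp [h]
  rw [wt, wt, hfe, Finset.card_erase_add_one hi]

lemma wt_flip_false {i : Fin d} {x : Fin d → Bool} (h : x i = false) :
    wt (flip i x) = wt x + 1 := by
  have hfe : (Finset.univ.filter fun j => flip i x j = true)
      = insert i (Finset.univ.filter fun j => x j = true) := by
    ext j
    by_cases hj : j = i
    · subst hj; simp [flip_self, h]
    · simp [flip_ne x hj, hj]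
  have hi : i ∉ Finset.univ.filter fun j => x j = true := by simp [h]
  rw [wt, wt, hfe, Finset.card_insert_of_notMem hi]

lemma hammingDist_flip (i : Fin d) (x : Fin d → Bool) : hammingDist x (flip i x) = 1 := by
  have : (Finset.univ.filter fun j => x j ≠ flip i x j) = {i} := by
    ext j
    by_cases hj : j = i
    · subst hj; simp [flip_self]
    · simp [flip_ne x hj, hj]
  rw [hammingDist, this, Finset.card_singleton]

lemma adj_flip (i : Fin d) (x : Fin d → Bool) : (Qube d).Adj x (flip i x) := by
  rw [Qube, SimpleGraph.fromRel_adj]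
  refine ⟨fun h => ?_, Or.inl (hammingDist_flip i x)⟩
  have h2 := congrFun h i
  rw [flip_self] at h2
  exact absurd h2 (by cases x i <;> simp)

/-- flip a list of coordinates in order -/
def flipList : List (Fin d) → (Fin d → Bool) → (Fin d → Bool)
  | [], x => x
  | i :: L, x => flipList L (flip i x)

@[simp] lemma flipList_nil (x : Fin d → Bool) : flipList [] x = x := rfl

@[simp] lemma flipList_cons (i : Fin d) (L : List (Fin d)) (x : Fin d → Bool) :
    flipList (i :: L) x = flipList L (flip i x) := rfl

lemma flipList_append (A B : List (Fin d)) (x : Fin d → Bool) :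
    flipList (A ++ B) x = flipList B (flipList A x) := by
  induction A generalizing x with
  | nil => rfl
  | cons i A ih => simp [ih]

lemma flipList_apply_of_not_mem {L : List (Fin d)} {j : Fin d} (x : Fin d → Bool)
    (h : j ∉ L) : flipList L x j = x j := by
  induction L generalizing x with
  | nil => rfl
  | cons i L ih =>
    have hji : j ≠ i := fun hh => h (hh ▸ (List.mem_cons_self : i ∈ i :: L))
    rw [flipList_cons, ih _ (fun hh => h (List.mem_cons_of_mem i hh)), flip_ne x hji]

lemma flipList_apply {L : List (Fin d)} (hnd : L.Nodup) (x : Fin d → Bool) (j : Fin d) :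
    flipList L x j = if j ∈ L then !x j else x j := by
  induction L generalizing x with
  | nil => simp
  | cons i L ih =>
    obtain ⟨hi, hnd'⟩ := List.nodup_cons.mp hnd
    rw [flipList_cons, ih hnd']
    by_cases hj : j ∈ L
    · have hji : j ≠ i := fun hh => hi (hh ▸ hj)
      simp [hj, flip_ne x hji]
    · by_cases hji : j = i
      · subst hji; simp [hj, flip_self]
      · simp [hj, hji, flip_ne x hji]

lemma flipList_eq_target {L : List (Fin d)} {x y : Fin d → Bool} (hnd : L.Nodup)
    (hmem : ∀ j, j ∈ L ↔ x j ≠ y j) : flipList L x = y := by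
  funext j
  rw [flipList_apply hnd]
  by_cases hj : j ∈ L
  · have := (hmem j).mp hj
    simp only [hj, if_true]
    cases hx : x j <;> cases hy : y j <;> simp_all
  · have := (hmem j).not.mp hj
    simp only [hj, if_false]
    cases hx : x j <;> cases hy : y j <;> simp_all

/-- the walk in the hypercube obtained by flipping a list of coordinates -/
def walkOfList : (L : List (Fin d)) → (x : Fin d → Bool) → (Qube d).Walk x (flipList L x)
  | [], _ => SimpleGraph.Walk.nil
  | i :: L, x => SimpleGraph.Walk.cons (adj_flip i x) (walkOfList L (flip i x))

@[simp] lemma walkOfList_length (L : List (Fin d)) (x : Fin d → Bool) :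
    (walkOfList L x).length = L.length := by
  induction L generalizing x with
  | nil => rfl
  | cons i L ih => simp [walkOfList, ih]

lemma walkOfList_support (L : List (Fin d)) (x : Fin d → Bool) :
    ∀ z ∈ (walkOfList L x).support, ∃ n, n ≤ L.length ∧ z = flipList (L.take n) x := by
  induction L generalizing x with
  | nil =>
    intro z hz
    rw [show (walkOfList [] x).support = [x] from rfl, List.mem_singleton] at hz
    exact ⟨0, Nat.le_refl _, hz⟩
  | cons i L ih =>
    intro z hz
    rw [show (walkOfList (i :: L) x).support = x :: (walkOfList L (flip i x)).support from rfl,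
      List.mem_cons] at hz
    rcases hz with rfl | hz
    · exact ⟨0, Nat.zero_le _, rfl⟩
    · obtain ⟨n, hn, hz⟩ := ih (flip i x) z hz
      exact ⟨n + 1, by simpa using hn, by simpa using hz⟩

lemma hamming_le_walk_length {x y : Fin d → Bool} (w : (Qube d).Walk x y) :
    hammingDist x y ≤ w.length := by
  induction w with
  | nil => simp
  | @cons a b c hab w ih =>
    rw [Qube, SimpleGraph.fromRel_adj] at hab
    have h1 : hammingDist a b = 1 := by
      rcases hab.2 with h | h
      · exact h
      · rw [hammingDist_comm]; exact h
    calc hammingDist a c ≤ hammingDist a b + hammingDist b c := hammingDist_triangle a b c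
      _ ≤ 1 + w.length := by omega
      _ = w.length + 1 := by omega

lemma wt_flipList_true {A : List (Fin d)} {x : Fin d → Bool} (hnd : A.Nodup)
    (h : ∀ i ∈ A, x i = true) : wt (flipList A x) + A.length = wt x := by
  induction A generalizing x with
  | nil => simp
  | cons i A ih =>
    obtain ⟨hi, hnd'⟩ := List.nodup_cons.mp hnd
    have hx : ∀ j ∈ A, flip i x j = true := fun j hj =>
      (flip_ne x (fun hh => hi (by rwa [hh] at hj))).trans (h j (List.mem_cons_of_mem i hj))
    have h1 := ih hnd' hx
    have h2 := wt_flip_true (h i List.mem_cons_self)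
    rw [flipList_cons]
    simp only [List.length_cons]
    omega

lemma wt_flipList_false {A : List (Fin d)} {x : Fin d → Bool} (hnd : A.Nodup)
    (h : ∀ i ∈ A, x i = false) : wt (flipList A x) = wt x + A.length := by
  induction A generalizing x with
  | nil => simp
  | cons i A ih =>
    obtain ⟨hi, hnd'⟩ := List.nodup_cons.mp hnd
    have hx : ∀ j ∈ A, flip i x j = false := fun j hj =>
      (flip_ne x (fun hh => hi (by rwa [hh] at hj))).trans (h j (List.mem_cons_of_mem i hj))
    have h1 := ih hnd' hx
    have h2 := wt_flip_false (h i List.mem_cons_self)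
    rw [flipList_cons]
    simp only [List.length_cons]
    omega

/-- The master lemma: a geodesic avoiding `X` internally gives visibility. -/
lemma visible_of_avoid (X : Set (Fin d → Bool)) (x y : Fin d → Bool)
    (L : List (Fin d)) (hnd : L.Nodup) (hmem : ∀ j, j ∈ L ↔ x j ≠ y j)
    (havoid : ∀ n, 0 < n → n < L.length → flipList (L.take n) x ∉ X) :
    IsVisiblePair (Qube d) X x y := by
  have hy : flipList L x = y := flipList_eq_target hnd hmem
  have hlen : hammingDist x y = L.length := by
    rw [hammingDist]
    have : (Finset.univ.filter fun i => x i ≠ y i) = L.toFinset := by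
      ext j; simp [hmem j]
    rw [this, List.toFinset_card_of_nodup hnd]
  set w : (Qube d).Walk x y := (walkOfList L x).copy rfl hy with hw
  have hwl : w.length = L.length := by
    rw [hw, SimpleGraph.Walk.length_copy, walkOfList_length]
  have hdist : (Qube d).dist x y = L.length := by
    refine le_antisymm (hwl ▸ SimpleGraph.dist_le w) ?_
    obtain ⟨q, hq⟩ := w.reachable.exists_walk_length_eq_dist
    rw [← hq, ← hlen]
    exact hamming_le_walk_length q
  have hbl : w.bypass.length = (Qube d).dist x y := by
    refine le_antisymm ?_ (SimpleGraph.dist_le _)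
    rw [hdist, ← hwl]
    exact SimpleGraph.Walk.length_bypass_le w
  refine ⟨w.bypass, SimpleGraph.Walk.bypass_isPath w, hbl, ?_⟩
  intro z hz hzX
  have hz' : z ∈ w.support := SimpleGraph.Walk.support_bypass_subset w hz
  rw [hw, SimpleGraph.Walk.support_copy] at hz'
  obtain ⟨n, hn, rfl⟩ := walkOfList_support L x z hz'
  rcases Nat.eq_zero_or_pos n with rfl | hn0
  · left; simp
  · rcases Nat.lt_or_ge n L.length with hlt | hge
    · exact absurd hzX (havoid n hn0 hlt)
    · right
      have : n = L.length := le_antisymm hn hge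
      rw [this, List.take_length, hy]

/-- symmetry of visibility -/
lemma IsVisiblePair.symm' {V : Type*} {G : SimpleGraph V} {X : Set V} {x y : V}
    (h : IsVisiblePair G X x y) : IsVisiblePair G X y x := by
  obtain ⟨q, hp, hl, hs⟩ := h
  refine ⟨q.reverse, hp.reverse, ?_, ?_⟩
  · rw [SimpleGraph.Walk.length_reverse, hl, SimpleGraph.dist_comm]
  · intro z hz hzX
    rw [SimpleGraph.Walk.support_reverse, List.mem_reverse] at hz
    exact (hs z hz hzX).symm

end TwoLayersAux
namespace TwoLayersAux

variable {d : ℕ}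

/-- interleave: `u₁ v₁ u₂ v₂ ... ` with trailing `u`s -/
def mix : List (Fin d) → List (Fin d) → List (Fin d)
  | us, [] => us
  | [], v :: vs => v :: vs
  | u :: us, v :: vs => u :: v :: mix us vs

@[simp] lemma mix_nil (us : List (Fin d)) : mix us [] = us := by cases us <;> rfl

@[simp] lemma mix_cons_cons (u v : Fin d) (us vs : List (Fin d)) :
    mix (u :: us) (v :: vs) = u :: v :: mix us vs := rfl

lemma mix_perm : ∀ (B A : List (Fin d)), (mix A B).Perm (A ++ B)
  | [], A => by simp
  | v :: vs, [] => by simp [mix]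
  | v :: vs, u :: us => by
    rw [mix_cons_cons]
    have h1 : (u :: v :: mix us vs).Perm (u :: v :: (us ++ vs)) :=
      ((mix_perm vs us).cons v).cons u
    have h2 : (u :: v :: (us ++ vs)).Perm ((u :: us) ++ v :: vs) := by
      simp only [List.cons_append]
      exact (List.perm_middle.symm).cons u
    exact h1.trans h2

lemma mixlem : ∀ (B A : List (Fin d)) (x : Fin d → Bool),
    A.length = B.length + 2 →
    (∀ i ∈ A, x i = false) → (∀ i ∈ B, x i = true) →
    (A ++ B).Nodup →
    ∀ n, 0 < n → n < A.length + B.length →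
      wt (flipList ((mix A B).take n) x) = wt x ∨
      wt (flipList ((mix A B).take n) x) = wt x + 1
  | [], A, x, hlen, hA, hB, hnd, n, hn, hn' => by
    obtain ⟨a0, a1, rfl⟩ := List.length_eq_two.mp (by simpa using hlen)
    simp only [List.length, List.length_nil] at hn'
    interval_cases n
    right
    show wt (flipList [a0] x) = wt x + 1
    exact wt_flip_false (hA a0 (by simp))
  | v :: vs, [], x, hlen, _, _, _, _, _, _ => by simp at hlen
  | v :: vs, u :: A', x, hlen, hA, hB, hnd, n, hn, hn' => by
    have hlen' : A'.length = vs.length + 2 := by simpa using hlen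
    have huv : u ≠ v := by
      intro h
      have h1 : x u = false := hA u (by simp)
      have h2 : x v = true := hB v (by simp)
      rw [h] at h1; rw [h1] at h2; exact Bool.noConfusion h2
    have hndA : (u :: (A' ++ v :: vs)).Nodup := by simpa using hnd
    have hu_not : u ∉ A' ++ v :: vs := (List.nodup_cons.mp hndA).1
    have hnd' : (A' ++ v :: vs).Nodup := (List.nodup_cons.mp hndA).2
    have hxu : x u = false := hA u (by simp)
    have hxv : x v = true := hB v (by simp)
    have hwt1 : wt (flip u x) = wt x + 1 := wt_flip_false hxu
    have hvu : flip u x v = x v := flip_ne x (fun h => huv h.symm)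
    have hwt2 : wt (flip v (flip u x)) + 1 = wt (flip u x) :=
      wt_flip_true (hvu.trans hxv)
    rw [mix_cons_cons]
    match n, hn with
    | 1, _ =>
      right
      show wt (flipList [u] x) = wt x + 1
      exact hwt1
    | 2, _ =>
      left
      show wt (flip v (flip u x)) = wt x
      omega
    | (m+3), _ =>
      have htake : (u :: v :: mix A' vs).take (m+3) = u :: v :: (mix A' vs).take (m+1) := rfl
      rw [htake]
      show wt (flipList ((mix A' vs).take (m+1)) (flip v (flip u x))) = wt x ∨ _
      set x2 := flip v (flip u x) with hx2
      have hx2A : ∀ i ∈ A', x2 i = false := by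
        intro i hi
        have hiu : i ≠ u := fun h => hu_not (h ▸ List.mem_append_left _ hi)
        have hiv : i ≠ v := by
          intro h
          exact (List.disjoint_of_nodup_append hnd') (h ▸ hi) (by simp)
        rw [hx2, flip_ne _ hiv, flip_ne _ hiu]
        exact hA i (by simp [hi])
      have hx2B : ∀ i ∈ vs, x2 i = true := by
        intro i hi
        have hiu : i ≠ u := fun h => hu_not (h ▸ List.mem_append_right _ (by simp [hi]))
        have hiv : i ≠ v := by
          intro h
          have h2 : (v :: vs).Nodup := (List.nodup_append.mp hnd').2.1
          exact (List.nodup_cons.mp h2).1 (h ▸ hi)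
        rw [hx2, flip_ne _ hiv, flip_ne _ hiu]
        exact hB i (by simp [hi])
      have hnd2 : (A' ++ vs).Nodup :=
        hnd'.sublist ((List.sublist_cons_self v vs).append_left A')
      have hwtx2 : wt x2 = wt x := by omega
      have hm : m + 1 < A'.length + vs.length := by
        simp only [List.length_cons] at hn'
        omega
      have := mixlem vs A' x2 hlen' hx2A hx2B hnd2 (m+1) (by omega) hm
      have heq : wt (flipList (u :: v :: (mix A' vs).take (m+1)) x)
          = wt (flipList ((mix A' vs).take (m+1)) x2) := rfl
      omega

end TwoLayersAux
namespace TwoLayersAux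

variable {d : ℕ}

/-- coordinates where `x` is one and `y` is zero -/
noncomputable def vList (x y : Fin d → Bool) : List (Fin d) :=
  (Finset.univ.filter fun i => x i = true ∧ y i = false).toList

/-- coordinates where `x` is zero and `y` is one -/
noncomputable def uList (x y : Fin d → Bool) : List (Fin d) :=
  (Finset.univ.filter fun i => x i = false ∧ y i = true).toList

lemma mem_vList {x y : Fin d → Bool} {i : Fin d} :
    i ∈ vList x y ↔ (x i = true ∧ y i = false) := by
  simp [vList, Finset.mem_toList]

lemma mem_uList {x y : Fin d → Bool} {i : Fin d} :
    i ∈ uList x y ↔ (x i = false ∧ y i = true) := by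
  simp [uList, Finset.mem_toList]

lemma nodup_vList (x y : Fin d → Bool) : (vList x y).Nodup := Finset.nodup_toList _

lemma nodup_uList (x y : Fin d → Bool) : (uList x y).Nodup := Finset.nodup_toList _

lemma nodup_vu (x y : Fin d → Bool) : (vList x y ++ uList x y).Nodup := by
  rw [List.nodup_append]
  refine ⟨nodup_vList x y, nodup_uList x y, ?_⟩
  intro i hiv j hiu hij
  subst hij
  rw [mem_vList] at hiv
  rw [mem_uList] at hiu
  rw [hiv.1] at hiu
  exact Bool.noConfusion hiu.1

lemma mem_vu {x y : Fin d → Bool} (j : Fin d) :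
    j ∈ vList x y ++ uList x y ↔ x j ≠ y j := by
  rw [List.mem_append, mem_vList, mem_uList]
  cases hx : x j <;> cases hy : y j <;> simp

lemma perm_uv_vu (x y : Fin d → Bool) :
    (uList x y ++ vList x y).Perm (vList x y ++ uList x y) :=
  List.perm_append_comm

lemma flipList_vu (x y : Fin d → Bool) : flipList (vList x y ++ uList x y) x = y :=
  flipList_eq_target (nodup_vu x y) mem_vu

lemma vList_all_true (x y : Fin d → Bool) : ∀ i ∈ vList x y, x i = true :=
  fun i hi => (mem_vList.mp hi).1

lemma uList_all_false (x y : Fin d → Bool) : ∀ i ∈ uList x y, x i = false :=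
  fun i hi => (mem_uList.mp hi).1

lemma wt_after_v (x y : Fin d → Bool) :
    wt (flipList (vList x y) x) + (vList x y).length = wt x :=
  wt_flipList_true (nodup_vList x y) (vList_all_true x y)

lemma uList_false_after_v (x y : Fin d → Bool) :
    ∀ i ∈ uList x y, flipList (vList x y) x i = false := by
  intro i hi
  have hiv : i ∉ vList x y := by
    rw [mem_vList]
    rw [mem_uList] at hi
    rw [hi.1]
    exact fun h => Bool.noConfusion h.1
  rw [flipList_apply_of_not_mem x hiv]
  exact (mem_uList.mp hi).1

lemma balance (x y : Fin d → Bool) :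
    wt y + (vList x y).length = wt x + (uList x y).length := by
  have h3 := flipList_vu x y
  rw [flipList_append] at h3
  have h1 := wt_after_v x y
  have h2 : wt (flipList (uList x y) (flipList (vList x y) x))
      = wt (flipList (vList x y) x) + (uList x y).length :=
    wt_flipList_false (nodup_uList x y) (uList_false_after_v x y)
  rw [h3] at h2
  omega

section Cases

variable {p : ℕ} {X : Set (Fin d → Bool)}

lemma vis_low_low (hX : ∀ z, z ∈ X ↔ (wt z = p ∨ wt z = p + 3))
    {x y : Fin d → Bool} (hx : wt x = p) (hy : wt y = p) :
    IsVisiblePair (Qube d) X x y := by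
  set v := vList x y with hv
  set u := uList x y with hu
  have hab : u.length = v.length := by
    have hb := balance x y
    rw [← hv, ← hu] at hb
    omega
  apply visible_of_avoid X x y (v ++ u) (nodup_vu x y) mem_vu
  intro n hn hln
  rw [List.length_append] at hln
  have key : wt (flipList ((v ++ u).take n) x) < p := by
    by_cases hcase : n ≤ v.length
    · rw [List.take_append_of_le_length hcase]
      have hnd : (v.take n).Nodup := (nodup_vList x y).sublist (List.take_sublist _ _)
      have h1 : wt (flipList (v.take n) x) + (v.take n).length = wt x :=
        wt_flipList_true hnd (fun i hi => vList_all_true x y i (List.mem_of_mem_take hi))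
      have h2 : (v.take n).length = n := by
        rw [List.length_take]
        omega
      omega
    · push_neg at hcase
      rw [List.take_append, List.take_of_length_le (le_of_lt hcase),
        flipList_append]
      set m := n - v.length with hm
      have hmu : m < u.length := by omega
      have hnd : (u.take m).Nodup := (nodup_uList x y).sublist (List.take_sublist _ _)
      have h1 : wt (flipList (u.take m) (flipList v x))
          = wt (flipList v x) + (u.take m).length :=
        wt_flipList_false hnd
          (fun i hi => uList_false_after_v x y i (List.mem_of_mem_take hi))
      have h2 : (u.take m).length = m := by
        rw [List.length_take]
        omega
      have h3 := wt_after_v x y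
      rw [← hv] at h3
      omega
  intro hmemX
  have := (hX _).mp hmemX
  omega

lemma vis_high_high (hX : ∀ z, z ∈ X ↔ (wt z = p ∨ wt z = p + 3))
    {x y : Fin d → Bool} (hx : wt x = p + 3) (hy : wt y = p + 3) :
    IsVisiblePair (Qube d) X x y := by
  set v := vList x y with hv
  set u := uList x y with hu
  have hab : u.length = v.length := by
    have hb := balance x y
    rw [← hv, ← hu] at hb
    omega
  have hperm := perm_uv_vu x y
  have hnd : (u ++ v).Nodup := (hperm.nodup_iff).mpr (nodup_vu x y)
  have hmem : ∀ j, j ∈ u ++ v ↔ x j ≠ y j := fun j => hperm.mem_iff.trans (mem_vu j)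
  apply visible_of_avoid X x y (u ++ v) hnd hmem
  intro n hn hln
  rw [List.length_append] at hln
  have hufalse : ∀ i ∈ u, x i = false := uList_all_false x y
  have hu_nd : u.Nodup := nodup_uList x y
  have key : p + 3 < wt (flipList ((u ++ v).take n) x) := by
    by_cases hcase : n ≤ u.length
    · rw [List.take_append_of_le_length hcase]
      have hnd' : (u.take n).Nodup := hu_nd.sublist (List.take_sublist _ _)
      have h1 : wt (flipList (u.take n) x) = wt x + (u.take n).length :=
        wt_flipList_false hnd' (fun i hi => hufalse i (List.mem_of_mem_take hi))
      have h2 : (u.take n).length = n := by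
        rw [List.length_take]
        omega
      omega
    · push_neg at hcase
      rw [List.take_append, List.take_of_length_le (le_of_lt hcase),
        flipList_append]
      set m := n - u.length with hm
      have hmv : m < v.length := by omega
      have hnd' : (v.take m).Nodup := (nodup_vList x y).sublist (List.take_sublist _ _)
      have hwtu : wt (flipList u x) = wt x + u.length :=
        wt_flipList_false hu_nd hufalse
      have hvtrue : ∀ i ∈ v.take m, flipList u x i = true := by
        intro i hi
        have hiv : i ∈ v := List.mem_of_mem_take hi
        have hiu : i ∉ u := by
          rw [hu, mem_uList]
          rw [hv, mem_vList] at hiv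
          rw [hiv.1]
          exact fun h => Bool.noConfusion h.1
        rw [flipList_apply_of_not_mem x hiu]
        exact (mem_vList.mp hiv).1
      have h1 : wt (flipList (v.take m) (flipList u x)) + (v.take m).length
          = wt (flipList u x) :=
        wt_flipList_true hnd' hvtrue
      have h2 : (v.take m).length = m := by
        rw [List.length_take]
        omega
      omega
  intro hmemX
  have := (hX _).mp hmemX
  omega

lemma vis_low_high (hX : ∀ z, z ∈ X ↔ (wt z = p ∨ wt z = p + 3))
    {x y : Fin d → Bool} (hx : wt x = p) (hy : wt y = p + 3) :
    IsVisiblePair (Qube d) X x y := by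
  set v := vList x y with hv
  set u := uList x y with hu
  have hab : u.length = v.length + 3 := by
    have hb := balance x y
    rw [← hv, ← hu] at hb
    omega
  obtain ⟨u0, us, hu0⟩ : ∃ u0 us, u = u0 :: us := by
    cases hcu : u with
    | nil => rw [hcu] at hab; simp at hab
    | cons a l => exact ⟨a, l, rfl⟩
  have hperm : ((u0 :: mix us v) : List (Fin d)).Perm (v ++ u) := by
    have h1 : (mix us v).Perm (us ++ v) := mix_perm v us
    have h2 : ((u0 :: mix us v) : List (Fin d)).Perm ((u0 :: us) ++ v) := h1.cons u0
    rw [← hu0] at h2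
    exact h2.trans (perm_uv_vu x y)
  have hnd : ((u0 :: mix us v) : List (Fin d)).Nodup := hperm.nodup_iff.mpr (nodup_vu x y)
  have hmem : ∀ j, j ∈ (u0 :: mix us v) ↔ x j ≠ y j := fun j => hperm.mem_iff.trans (mem_vu j)
  have hund : u.Nodup := nodup_uList x y
  have hu0us : u0 ∉ us := by rw [hu0] at hund; exact (List.nodup_cons.mp hund).1
  have hxu0 : x u0 = false := uList_all_false x y u0 (by rw [← hu, hu0]; simp)
  have hwt1 : wt (flip u0 x) = wt x + 1 := wt_flip_false hxu0
  have hlen' : us.length = v.length + 2 := by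
    rw [hu0] at hab
    simp only [List.length_cons] at hab
    omega
  have hA : ∀ i ∈ us, flip u0 x i = false := by
    intro i hi
    have hne : i ≠ u0 := fun h => hu0us (h ▸ hi)
    rw [flip_ne x hne]
    exact uList_all_false x y i (by rw [← hu, hu0]; exact List.mem_cons_of_mem _ hi)
  have hB : ∀ i ∈ v, flip u0 x i = true := by
    intro i hi
    have hitrue : x i = true := vList_all_true x y i hi
    have hne : i ≠ u0 := by
      intro h
      rw [h, hxu0] at hitrue
      exact Bool.noConfusion hitrue
    rw [flip_ne x hne]
    exact hitrue
  have hndAB : (us ++ v).Nodup :=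
    ((mix_perm v us).nodup_iff).mp (List.nodup_cons.mp hnd).2
  apply visible_of_avoid X x y (u0 :: mix us v) hnd hmem
  intro n hn hln
  have hmixlen : (mix us v).length = us.length + v.length :=
    ((mix_perm v us).length_eq).trans List.length_append
  have hLlen : ((u0 :: mix us v) : List (Fin d)).length = us.length + v.length + 1 := by
    simp [hmixlen]
  have key : wt (flipList ((u0 :: mix us v).take n) x) = p + 1 ∨
      wt (flipList ((u0 :: mix us v).take n) x) = p + 2 := by
    match n, hn with
    | 1, _ =>
      left
      show wt (flip u0 x) = p + 1
      omega
    | (m+2), _ =>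
      have htake : ((u0 :: mix us v) : List (Fin d)).take (m+2)
          = u0 :: (mix us v).take (m+1) := rfl
      rw [htake]
      have heq : flipList (u0 :: (mix us v).take (m+1)) x
          = flipList ((mix us v).take (m+1)) (flip u0 x) := rfl
      rw [heq]
      have hmm : m + 1 < us.length + v.length := by
        rw [hLlen] at hln
        omega
      have := mixlem v us (flip u0 x) hlen' hA hB hndAB (m+1) (by omega) hmm
      omega
  intro hmemX
  have := (hX _).mp hmemX
  omega

end Cases

end TwoLayersAux
/-- In `Q_d`, with `p = ⌊d/2⌋`, the union of the layers with exactly `p` ones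
and exactly `p + 3` ones is a mutual-visibility set. -/
theorem two_layers_mutualVisSet (d : ℕ) :
    MutualVisSet (Qube d)
      ({x : Fin d → Bool | (Finset.univ.filter fun i => x i = true).card = d / 2} ∪
       {x : Fin d → Bool | (Finset.univ.filter fun i => x i = true).card = d / 2 + 3}) := by
  intro x hx y hy
  have hX : ∀ z : Fin d → Bool,
      z ∈ ({x : Fin d → Bool | (Finset.univ.filter fun i => x i = true).card = d / 2} ∪
       {x : Fin d → Bool | (Finset.univ.filter fun i => x i = true).card = d / 2 + 3}) ↔
      (TwoLayersAux.wt z = d / 2 ∨ TwoLayersAux.wt z = d / 2 + 3) := fun z => Iff.rfl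
  have hx' := (hX x).mp hx
  have hy' := (hX y).mp hy
  rcases hx' with h1 | h1 <;> rcases hy' with h2 | h2
  · exact TwoLayersAux.vis_low_low hX h1 h2
  · exact TwoLayersAux.vis_low_high hX h1 h2
  · exact TwoLayersAux.IsVisiblePair.symm' (TwoLayersAux.vis_low_high hX h2 h1)
  · exact TwoLayersAux.vis_high_high hX h1 h2
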